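/- For every connected graph H on n ≥ 4 vertices there exists a 2-coloring of the edges of K_n such that every copy of H uses both colors. (If some spanning tree of H is a star, color the edges of a Hamiltonian cycle red and the rest blue; otherwise color all edges at a fixed vertex v red and the rest blue.) -/

import Mathlib

open Fin.NatCast in
theorem two_coloring_every_copy_bicolored (n : ℕ) (hn : 4 ≤ n)
    (H : SimpleGraph (Fin n)) (hconn : H.Connected) :
    ∃ c : Fin n → Fin n → Fin 2, (∀ i j, c i j = c j i) ∧
      ∀ φ : Fin n → Fin n, Function.Injective φ →
        ∀ col : Fin 2, ∃ u v : Fin n, H.Adj u v ∧ c (φ u) (φ v) = col := by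
  have hNZ : NeZero n := ⟨by omega⟩
  have hval : ∀ m : ℕ, m < n → (((m:ℕ) : Fin n) : ℕ) = m := by
    intro m hm
    rw [Fin.val_natCast, Nat.mod_eq_of_lt hm]
  have hcast_ne : ∀ a b : ℕ, a < n → b < n → a ≠ b → ((a:ℕ):Fin n) ≠ ((b:ℕ):Fin n) := by
    intro a b ha hb hab h
    have := congrArg Fin.val h
    rw [hval a ha, hval b hb] at this
    exact hab this
  have hnbr : ∀ x : Fin n, ∃ y, H.Adj x y := by
    intro x
    have hz : ∃ z : Fin n, z ≠ x := by
      rcases eq_or_ne x (((0:ℕ)):Fin n) with h | h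
      · exact ⟨((1:ℕ):Fin n), h ▸ hcast_ne 1 0 (by omega) (by omega) (by omega)⟩
      · exact ⟨((0:ℕ):Fin n), fun hh => h hh.symm⟩
    obtain ⟨z, hz⟩ := hz
    obtain ⟨p⟩ := hconn x z
    cases p with
    | nil => exact absurd rfl hz.symm
    | cons ha _ => exact ⟨_, ha⟩
  by_cases hstar : ∃ v : Fin n, ∀ w, w ≠ v → H.Adj v w
  · -- H has a dominating vertex: color a Hamiltonian cycle with color 1
    obtain ⟨v, hv⟩ := hstar
    refine ⟨fun i j => if j = i + ((1:ℕ):Fin n) ∨ i = j + ((1:ℕ):Fin n) then 1 else 0,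
      fun i j => by simp [or_comm], ?_⟩
    intro φ hφ col
    have hbij : Function.Bijective φ := Finite.injective_iff_bijective.mp hφ
    let e := Equiv.ofBijective φ hbij
    have hsymm : ∀ z : Fin n, φ (e.symm z) = z := fun z => e.apply_symm_apply z
    have hwd : ∀ d : ℕ, 0 < d → d < n →
        φ (e.symm (φ v + ((d:ℕ):Fin n))) = φ v + ((d:ℕ):Fin n) ∧
        e.symm (φ v + ((d:ℕ):Fin n)) ≠ v := by
      intro d hd hdn
      refine ⟨hsymm _, fun h => ?_⟩
      have h2 : φ v + ((d:ℕ):Fin n) = φ v := by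
        conv_rhs => rw [← h]
        exact (hsymm _).symm
      have h3 : ((d:ℕ):Fin n) = 0 := by
        have := congrArg (fun x => x - φ v) h2
        simpa [add_comm, add_sub_cancel_right] using this
      exact hcast_ne d 0 hdn (by omega) (by omega) (by simpa using h3)
    fin_cases col
    · -- color 0: use v and the vertex mapping to (φ v)+2
      obtain ⟨heq, hne⟩ := hwd 2 (by omega) (by omega)
      refine ⟨v, e.symm (φ v + ((2:ℕ):Fin n)), hv _ hne, ?_⟩
      simp only [heq]
      rw [if_neg]
      · rfl
      rintro (h | h)
      · have := add_left_cancel h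
        exact hcast_ne 2 1 (by omega) (by omega) (by omega) this
      · rw [add_assoc] at h
        have h4 : (0:Fin n) = ((2:ℕ):Fin n) + ((1:ℕ):Fin n) := by
          have := congrArg (fun x => x - φ v) h
          simpa [add_comm, add_sub_cancel_right] using this
        have h3 : ((2:ℕ):Fin n) + ((1:ℕ):Fin n) = ((3:ℕ):Fin n) := by
          apply Fin.ext; rw [Fin.val_add, hval 2 (by omega), hval 1 (by omega), hval 3 (by omega)]
          exact Nat.mod_eq_of_lt (by omega)
        rw [h3] at h4
        exact hcast_ne 3 0 (by omega) (by omega) (by omega) h4.symm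
    · -- color 1: use v and the vertex mapping to (φ v)+1
      obtain ⟨heq, hne⟩ := hwd 1 (by omega) (by omega)
      refine ⟨v, e.symm (φ v + ((1:ℕ):Fin n)), hv _ hne, ?_⟩
      simp only [heq]
      simp
  · -- no dominating vertex: color edges at vertex 0 with color 1
    push_neg at hstar
    refine ⟨fun i j => if i = 0 ∨ j = 0 then 1 else 0,
      fun i j => by simp [or_comm], ?_⟩
    intro φ hφ col
    have hbij : Function.Bijective φ := Finite.injective_iff_bijective.mp hφ
    let e := Equiv.ofBijective φ hbij
    have hφu : φ (e.symm 0) = 0 := e.apply_symm_apply 0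
    set u := e.symm 0 with hu
    fin_cases col
    · -- color 0: an edge not incident to u
      obtain ⟨w, hwu, hnadj⟩ := hstar u
      obtain ⟨x, hwx⟩ := hnbr w
      have hxu : x ≠ u := fun h => hnadj ((h ▸ hwx).symm)
      have hφw : φ w ≠ 0 := fun h => hwu (hφ (h.trans hφu.symm))
      have hφx : φ x ≠ 0 := fun h => hxu (hφ (h.trans hφu.symm))
      refine ⟨w, x, hwx, ?_⟩
      simp only []
      rw [if_neg (by tauto)]
      rfl
    · obtain ⟨y, huy⟩ := hnbr u
      refine ⟨u, y, huy, ?_⟩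
      simp only [hφu]
      simp
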